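/- arXiv:1011.5677 — 5 statements merged into one kernel-verified Lean document; each statement's English description precedes it below -/
import Mathlib

section
/- Let X be a compact subset of ℝ, A a lattice, F a lattice of parameters. Suppose U(x|f) is bounded, nondecreasing in x, and has increasing differences in x and f. Suppose the transition kernel P(·|x,a,f) is a family of Borel probability measures on X that is stochastically nondecreasing in x, a, and f, stochastically supermodular in (x,a), and has stochastically increasing differences in (x,a) and f. Then T(x,a,f) = ∫ U(x'|f) P(dx'|x,a,f) is nondecreasing in x and a, supermodular in (x,a), and has increasing differences in (x,a) and f. -/
open MeasureTheory Set

private lemma integrable_of_bdd {μ : Measure ℝ} [IsProbabilityMeasure μ]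
    {φ : ℝ → ℝ} (hm : Measurable φ) {C : ℝ} (hb : ∀ z, |φ z| ≤ C) :
    Integrable φ μ :=
  ⟨hm.aestronglyMeasurable, HasFiniteIntegral.of_bounded (C := C)
    (Filter.Eventually.of_forall fun z => by simpa using hb z)⟩

theorem stmt_4 {A F : Type*} [Lattice A] [Lattice F]
    (X : Set ℝ) (hX : IsCompact X)
    (P : ℝ → A → F → Measure ℝ)
    (hPprob : ∀ x a f, IsProbabilityMeasure (P x a f))
    (hPsupp : ∀ x a f, P x a f Xᶜ = 0)
    -- stochastically nondecreasing in x, a and f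
    (hPmono : ∀ (φ : ℝ → ℝ), Measurable φ → Monotone φ → (∃ C, ∀ z, |φ z| ≤ C) →
      ∀ x x' (a a' : A) (f f' : F), x ≤ x' → a ≤ a' → f ≤ f' →
        ∫ z, φ z ∂(P x a f) ≤ ∫ z, φ z ∂(P x' a' f'))
    -- stochastically supermodular in (x,a)
    (hPsm : ∀ (φ : ℝ → ℝ), Measurable φ → Monotone φ → (∃ C, ∀ z, |φ z| ≤ C) →
      ∀ x x' (a a' : A) (f : F),
        ∫ z, φ z ∂(P x a f) + ∫ z, φ z ∂(P x' a' f) ≤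
          ∫ z, φ z ∂(P (max x x') (a ⊔ a') f) + ∫ z, φ z ∂(P (min x x') (a ⊓ a') f))
    -- stochastically increasing differences in (x,a) and f
    (hPid : ∀ (φ : ℝ → ℝ), Measurable φ → Monotone φ → (∃ C, ∀ z, |φ z| ≤ C) →
      ∀ x x' (a a' : A) (f f' : F), x ≤ x' → a ≤ a' → f ≤ f' →
        ∫ z, φ z ∂(P x' a' f) - ∫ z, φ z ∂(P x a f) ≤
          ∫ z, φ z ∂(P x' a' f') - ∫ z, φ z ∂(P x a f'))
    (U : ℝ → F → ℝ)
    (hUb : ∃ C, ∀ x f, |U x f| ≤ C)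
    (hUmeas : ∀ f, Measurable (fun x => U x f))
    (hUmono : ∀ f, Monotone (fun x => U x f))
    (hUid : ∀ (x x' : ℝ) (f f' : F), x ≤ x' → f ≤ f' →
      U x' f - U x f ≤ U x' f' - U x f') :
    -- T(x,a,f) = ∫ U(x'|f) P(dx'|x,a,f)
    (∀ (a : A) (f : F), Monotone (fun x => ∫ z, U z f ∂(P x a f))) ∧
    (∀ (x : ℝ) (f : F), Monotone (fun a => ∫ z, U z f ∂(P x a f))) ∧
    (∀ (x x' : ℝ) (a a' : A) (f : F),
      ∫ z, U z f ∂(P x a f) + ∫ z, U z f ∂(P x' a' f) ≤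
        ∫ z, U z f ∂(P (max x x') (a ⊔ a') f) + ∫ z, U z f ∂(P (min x x') (a ⊓ a') f)) ∧
    (∀ (x x' : ℝ) (a a' : A) (f f' : F), x ≤ x' → a ≤ a' → f ≤ f' →
      ∫ z, U z f ∂(P x' a' f) - ∫ z, U z f ∂(P x a f) ≤
        ∫ z, U z f' ∂(P x' a' f') - ∫ z, U z f' ∂(P x a f')) := by
  obtain ⟨C, hC⟩ := hUb
  have hbdd : ∀ f : F, ∃ C, ∀ z, |U z f| ≤ C := fun f => ⟨C, fun z => hC z f⟩
  refine ⟨?_, ?_, ?_, ?_⟩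
  · intro a f x x' hx
    exact hPmono _ (hUmeas f) (hUmono f) (hbdd f) x x' a a f f hx le_rfl le_rfl
  · intro x f a a' ha
    exact hPmono _ (hUmeas f) (hUmono f) (hbdd f) x x a a' f f le_rfl ha le_rfl
  · intro x x' a a' f
    exact hPsm _ (hUmeas f) (hUmono f) (hbdd f) x x' a a' f
  · intro x x' a a' f f' hx ha hf
    have h1 := hPid _ (hUmeas f) (hUmono f) (hbdd f) x x' a a' f f' hx ha hf
    -- ψ = U · f' - U · f is monotone and bounded
    set ψ : ℝ → ℝ := fun z => U z f' - U z f with hψ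
    have hψm : Measurable ψ := (hUmeas f').sub (hUmeas f)
    have hψmono : Monotone ψ := fun z z' hz => by
      have := hUid z z' f f' hz hf
      simp only [hψ]; linarith
    have hψb : ∃ C, ∀ z, |ψ z| ≤ C :=
      ⟨C + C, fun z => (abs_sub (U z f') (U z f)).trans (add_le_add (hC z f') (hC z f))⟩
    have h2 := hPmono ψ hψm hψmono hψb x x' a a' f' f' hx ha le_rfl
    haveI := hPprob x a f'
    haveI := hPprob x' a' f'
    have hi1 : Integrable (fun z => U z f') (P x a f') :=
      integrable_of_bdd (hUmeas f') (fun z => hC z f')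
    have hi2 : Integrable (fun z => U z f) (P x a f') :=
      integrable_of_bdd (hUmeas f) (fun z => hC z f)
    have hi3 : Integrable (fun z => U z f') (P x' a' f') :=
      integrable_of_bdd (hUmeas f') (fun z => hC z f')
    have hi4 : Integrable (fun z => U z f) (P x' a' f') :=
      integrable_of_bdd (hUmeas f) (fun z => hC z f)
    rw [show (fun z => ψ z) = fun z => U z f' - U z f from rfl] at h2
    rw [integral_sub hi1 hi2, integral_sub hi3 hi4] at h2
    linarith
end

section
/- Let X, A be compact subsets of ℝ and F a lattice. Suppose W(x,a,f) is supermodular in (x,a), has increasing differences in (x,a) and f, and the feasible action correspondence A(x) ⊆ A is nondecreasing in x with each A(x) compact and the supremum over a ∈ A(x) of W(x,a,f) attained. Then U*(x|f) = sup_{a ∈ A(x)} W(x,a,f) has increasing differences in x and f. -/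
open Set

lemma sSup_image_eq_of_max {s : Set ℝ} {g : ℝ → ℝ} {a : ℝ} (ha : a ∈ s)
    (hmax : ∀ b ∈ s, g b ≤ g a) : sSup (g '' s) = g a := by
  apply le_antisymm
  · exact csSup_le ⟨g a, ⟨a, ha, rfl⟩⟩ (by rintro _ ⟨b, hb, rfl⟩; exact hmax b hb)
  · exact le_csSup ⟨g a, by rintro _ ⟨b, hb, rfl⟩; exact hmax b hb⟩ ⟨a, ha, rfl⟩

theorem stmt_5 {F : Type*} [Lattice F]
    (X A : Set ℝ) (hX : IsCompact X) (hA : IsCompact A)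
    (W : ℝ → ℝ → F → ℝ)
    -- supermodular in (x,a)
    (hWsm : ∀ (x x' a a' : ℝ) (f : F),
      W x a f + W x' a' f ≤ W (max x x') (max a a') f + W (min x x') (min a a') f)
    -- increasing differences in (x,a) and f
    (hWid : ∀ (x x' a a' : ℝ) (f f' : F), x ≤ x' → a ≤ a' → f ≤ f' →
      W x' a' f - W x a f ≤ W x' a' f' - W x a f')
    (Acal : ℝ → Set ℝ)
    (hAsub : ∀ x, Acal x ⊆ A)
    (hAcpt : ∀ x, IsCompact (Acal x))
    -- nondecreasing correspondence
    (hAmono : ∀ x x' : ℝ, x ≤ x' → ∀ a ∈ Acal x, ∀ a' ∈ Acal x',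
      max a a' ∈ Acal x' ∧ min a a' ∈ Acal x)
    -- the supremum is attained
    (hatt : ∀ (x : ℝ) (f : F), ∃ a ∈ Acal x, ∀ b ∈ Acal x, W x b f ≤ W x a f) :
    -- U*(x|f) = sup_{a ∈ Acal(x)} W(x,a,f) has increasing differences in x and f
    ∀ (x x' : ℝ) (f f' : F), x ≤ x' → f ≤ f' →
      sSup ((fun a => W x' a f) '' Acal x') - sSup ((fun a => W x a f) '' Acal x) ≤
        sSup ((fun a => W x' a f') '' Acal x') - sSup ((fun a => W x a f') '' Acal x) := by
  intro x x' f f' hx hf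
  obtain ⟨a', ha', hopt'⟩ := hatt x' f
  obtain ⟨a, ha, hopt⟩ := hatt x f'
  obtain ⟨hm, hn⟩ := hAmono x x' hx a ha a' ha'
  rw [sSup_image_eq_of_max ha' hopt', sSup_image_eq_of_max ha hopt]
  have h1 : sSup ((fun b => W x b f) '' Acal x) ≥ W x (min a a') f :=
    le_csSup (by
      obtain ⟨c, hc, hcopt⟩ := hatt x f
      exact ⟨W x c f, by rintro _ ⟨b, hb, rfl⟩; exact hcopt b hb⟩) ⟨min a a', hn, rfl⟩
  have h2 : W x' (max a a') f' ≤ sSup ((fun b => W x' b f') '' Acal x') :=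
    le_csSup (by
      obtain ⟨c, hc, hcopt⟩ := hatt x' f'
      exact ⟨W x' c f', by rintro _ ⟨b, hb, rfl⟩; exact hcopt b hb⟩) ⟨max a a', hm, rfl⟩
  have hsm := hWsm x' x a' a f
  rw [max_comm x' x, min_comm x' x, max_comm a' a, min_comm a' a,
    max_eq_right hx, min_eq_left hx] at hsm
  have hid := hWid x x' a (max a a') f f' hx (le_max_left a a') hf
  linarith
end

section
/- Let X ⊆ ℝ be compact, μ, μ' : X → A nondecreasing strategies with μ'(x) ≥ μ(x) for all x, f, f' parameters with f' ⪰ f, and g, g' Borel probability measures on X with g' ⪰_SD g. Suppose the kernel P(·|x,a,f) is stochastically nondecreasing in (x,a) jointly and stochastically nondecreasing in a and f. Then the measure Q_{μ',f'}(g') defined by Q_{μ,f}(g)(S) = ∫ P(S|x,μ(x),f) g(dx) satisfies Q_{μ',f'}(g') ⪰_SD Q_{μ,f}(g). -/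
open MeasureTheory Set ProbabilityTheory

lemma my_bind_eq_snd (g : Measure ℝ) [IsProbabilityMeasure g] (κ : Kernel ℝ ℝ)
    [IsMarkovKernel κ] :
    g.bind (fun x => κ x) = (g.compProd κ).map Prod.snd := by
  ext s hs
  rw [Measure.map_apply measurable_snd hs, Measure.compProd_apply (measurable_snd hs),
    Measure.bind_apply hs (Kernel.measurable κ).aemeasurable]
  rfl

lemma my_integral_bind (g : Measure ℝ) [IsProbabilityMeasure g] (κ : Kernel ℝ ℝ)
    [IsMarkovKernel κ] (φ : ℝ → ℝ) (hφ : Measurable φ) (C : ℝ) (hC : ∀ z, |φ z| ≤ C) :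
    ∫ z, φ z ∂(g.bind (fun x => κ x)) = ∫ x, ∫ z, φ z ∂(κ x) ∂g := by
  rw [my_bind_eq_snd, integral_map measurable_snd.aemeasurable
    (hφ.aestronglyMeasurable)]
  have hint : Integrable (fun p : ℝ × ℝ => φ p.2) (g.compProd κ) := by
    refine Integrable.mono' (integrable_const C) (hφ.comp measurable_snd).aestronglyMeasurable ?_
    filter_upwards with p
    simpa [Real.norm_eq_abs] using hC p.2
  exact Measure.integral_compProd hint

theorem stmt_7 {A F : Type*} [PartialOrder A] [PartialOrder F]
    (X : Set ℝ) (hX : IsCompact X)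
    (P : ℝ → A → F → Measure ℝ)
    (hPprob : ∀ x a f, IsProbabilityMeasure (P x a f))
    (hPsupp : ∀ x a f, P x a f Xᶜ = 0)
    -- stochastically nondecreasing in (x,a) jointly and in f
    (hPmono : ∀ (φ : ℝ → ℝ), Measurable φ → Monotone φ → (∃ C, ∀ z, |φ z| ≤ C) →
      ∀ (x x' : ℝ) (a a' : A) (f f' : F), x ≤ x' → a ≤ a' → f ≤ f' →
        ∫ z, φ z ∂(P x a f) ≤ ∫ z, φ z ∂(P x' a' f'))
    (μ μ' : ℝ → A) (hμmono : Monotone μ) (hμ'mono : Monotone μ')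
    (hμle : ∀ x, μ x ≤ μ' x)
    (f f' : F) (hff' : f ≤ f')
    (g g' : Measure ℝ) [IsProbabilityMeasure g] [IsProbabilityMeasure g']
    (hg : g Xᶜ = 0) (hg' : g' Xᶜ = 0)
    -- g' first-order stochastically dominates g
    (hgg' : ∀ (φ : ℝ → ℝ), Measurable φ → Monotone φ → (∃ C, ∀ z, |φ z| ≤ C) →
      ∫ z, φ z ∂g ≤ ∫ z, φ z ∂g')
    (hker : Measurable (fun x => P x (μ x) f))
    (hker' : Measurable (fun x => P x (μ' x) f')) :
    -- Q_{μ',f'}(g') ⪰_SD Q_{μ,f}(g)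
    ∀ (φ : ℝ → ℝ), Measurable φ → Monotone φ → (∃ C, ∀ z, |φ z| ≤ C) →
      ∫ z, φ z ∂(g.bind (fun x => P x (μ x) f)) ≤
        ∫ z, φ z ∂(g'.bind (fun x => P x (μ' x) f')) := by
  intro φ hφm hφmono ⟨C, hC⟩
  have hC0 : 0 ≤ C := le_trans (abs_nonneg _) (hC 0)
  set κ : Kernel ℝ ℝ := ⟨fun x => P x (μ x) f, hker⟩ with hκdef
  set κ' : Kernel ℝ ℝ := ⟨fun x => P x (μ' x) f', hker'⟩ with hκ'def
  haveI : IsMarkovKernel κ := ⟨fun x => hPprob x (μ x) f⟩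
  haveI : IsMarkovKernel κ' := ⟨fun x => hPprob x (μ' x) f'⟩
  have hκ : ∀ x, κ x = P x (μ x) f := fun _ => rfl
  have hκ' : ∀ x, κ' x = P x (μ' x) f' := fun _ => rfl
  -- the two inner-integral functions
  set ψ : ℝ → ℝ := fun x => ∫ z, φ z ∂(P x (μ x) f) with hψdef
  set ψ' : ℝ → ℝ := fun x => ∫ z, φ z ∂(P x (μ' x) f') with hψ'def
  have hψm : Measurable ψ := by
    have : StronglyMeasurable fun x => ∫ z, (fun (_ : ℝ) (y : ℝ) => φ y) x z ∂(κ x) :=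
      StronglyMeasurable.integral_kernel_prod_right
        ((hφm.comp measurable_snd).stronglyMeasurable)
    exact this.measurable
  have hψ'm : Measurable ψ' := by
    have : StronglyMeasurable fun x => ∫ z, (fun (_ : ℝ) (y : ℝ) => φ y) x z ∂(κ' x) :=
      StronglyMeasurable.integral_kernel_prod_right
        ((hφm.comp measurable_snd).stronglyMeasurable)
    exact this.measurable
  have hψ'mono : Monotone ψ' := fun x x' hxx' =>
    hPmono φ hφm hφmono ⟨C, hC⟩ x x' (μ' x) (μ' x') f' f' hxx' (hμ'mono hxx') le_rfl
  have hψbd : ∀ x, |ψ x| ≤ C := by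
    intro x
    haveI := hPprob x (μ x) f
    calc |ψ x| = ‖∫ z, φ z ∂(P x (μ x) f)‖ := rfl
    _ ≤ C * ((P x (μ x) f) Set.univ).toReal := by
        refine norm_integral_le_of_norm_le_const ?_
        filter_upwards with z
        simpa [Real.norm_eq_abs] using hC z
    _ = C := by simp
  have hψ'bd : ∀ x, |ψ' x| ≤ C := by
    intro x
    haveI := hPprob x (μ' x) f'
    calc |ψ' x| = ‖∫ z, φ z ∂(P x (μ' x) f')‖ := rfl
    _ ≤ C * ((P x (μ' x) f') Set.univ).toReal := by
        refine norm_integral_le_of_norm_le_const ?_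
        filter_upwards with z
        simpa [Real.norm_eq_abs] using hC z
    _ = C := by simp
  have hle : ∀ x, ψ x ≤ ψ' x := fun x =>
    hPmono φ hφm hφmono ⟨C, hC⟩ x x (μ x) (μ' x) f f' le_rfl (hμle x) hff'
  have key1 : ∫ z, φ z ∂(g.bind (fun x => P x (μ x) f)) = ∫ x, ψ x ∂g :=
    my_integral_bind g κ φ hφm C hC
  have key2 : ∫ z, φ z ∂(g'.bind (fun x => P x (μ' x) f')) = ∫ x, ψ' x ∂g' :=
    my_integral_bind g' κ' φ hφm C hC
  rw [key1, key2]
  have hψint : Integrable ψ g := by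
    refine Integrable.mono' (integrable_const C) hψm.aestronglyMeasurable ?_
    filter_upwards with x
    simpa [Real.norm_eq_abs] using hψbd x
  have hψ'int : Integrable ψ' g := by
    refine Integrable.mono' (integrable_const C) hψ'm.aestronglyMeasurable ?_
    filter_upwards with x
    simpa [Real.norm_eq_abs] using hψ'bd x
  calc ∫ x, ψ x ∂g ≤ ∫ x, ψ' x ∂g := integral_mono hψint hψ'int hle
  _ ≤ ∫ x, ψ' x ∂g' := hgg' ψ' hψ'm hψ'mono ⟨C, hψ'bd⟩
end

section
/- Let A = [a̲, ā] be a compact real interval, c : A → ℝ convex and nondecreasing, and h : X × A → ℝ with X ⊆ ℝ, where h is nondecreasing in x and a, concave in a, and supermodular in (x,a). Define C(x,ĥ) = inf{c(a) : h(x,a) = ĥ}. Then C has decreasing differences in x and ĥ: for x' > x and ĥ' > ĥ with ĥ', ĥ ∈ H(x') ∩ H(x), C(x',ĥ') − C(x,ĥ') ≤ C(x',ĥ) − C(x,ĥ). -/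
open Set

private lemma slope_cmp {f : ℝ → ℝ} {s : Set ℝ} (hf : ConvexOn ℝ s f)
    {b1 b2 a1 a2 : ℝ} (hb1 : b1 ∈ s) (hb2 : b2 ∈ s) (ha1 : a1 ∈ s) (ha2 : a2 ∈ s)
    (h1 : b1 ≤ a1) (h2 : b2 ≤ a2) (hb : b1 < b2) (ha : a1 < a2) :
    (f b2 - f b1) / (b2 - b1) ≤ (f a2 - f a1) / (a2 - a1) := by
  have hba2 : b1 ≠ a2 := ne_of_lt (lt_of_le_of_lt h1 ha)
  have step1 : (f b2 - f b1) / (b2 - b1) ≤ (f a2 - f b1) / (a2 - b1) :=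
    hf.secant_mono hb1 hb2 ha2 (ne_of_gt hb) (Ne.symm hba2) h2
  have step2 : (f b1 - f a2) / (b1 - a2) ≤ (f a1 - f a2) / (a1 - a2) :=
    hf.secant_mono ha2 hb1 ha1 hba2 (ne_of_lt ha) h1
  have e1 : (f b1 - f a2) / (b1 - a2) = (f a2 - f b1) / (a2 - b1) := by
    rw [← neg_div_neg_eq]; ring_nf
  have e2 : (f a1 - f a2) / (a1 - a2) = (f a2 - f a1) / (a2 - a1) := by
    rw [← neg_div_neg_eq]; ring_nf
  rw [e1, e2] at step2
  linarith

private lemma least_level {aL aU : ℝ} {f : ℝ → ℝ} (hf : ContinuousOn f (Icc aL aU)) {v : ℝ}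
    (hv : v ∈ f '' Icc aL aU) :
    ∃ a, (a ∈ Icc aL aU ∧ f a = v) ∧ ∀ b ∈ Icc aL aU, f b = v → a ≤ b := by
  have hcl : IsClosed (Icc aL aU ∩ f ⁻¹' {v}) :=
    hf.preimage_isClosed_of_isClosed isClosed_Icc isClosed_singleton
  have hcp : IsCompact (Icc aL aU ∩ f ⁻¹' {v}) :=
    (isCompact_Icc).of_isClosed_subset hcl inter_subset_left
  obtain ⟨a0, ha0, hfa0⟩ := hv
  obtain ⟨a, ha, hle⟩ := hcp.exists_isLeast ⟨a0, ha0, by simpa using hfa0⟩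
  exact ⟨a, ⟨ha.1, by simpa using ha.2⟩, fun b hb hfb => hle ⟨hb, by simpa using hfb⟩⟩

private lemma sInf_level {aL aU : ℝ} {c f : ℝ → ℝ} (hcmono : MonotoneOn c (Icc aL aU)) {v a : ℝ}
    (ha : a ∈ Icc aL aU ∧ f a = v) (hle : ∀ b ∈ Icc aL aU, f b = v → a ≤ b) :
    sInf (c '' {b ∈ Icc aL aU | f b = v}) = c a := by
  apply le_antisymm
  · apply csInf_le
    · refine ⟨c a, ?_⟩
      rintro _ ⟨b, ⟨hb, hfb⟩, rfl⟩
      exact hcmono ha.1 hb (hle b hb hfb)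
    · exact ⟨a, ⟨ha.1, ha.2⟩, rfl⟩
  · apply le_csInf
    · exact ⟨c a, a, ⟨ha.1, ha.2⟩, rfl⟩
    · rintro _ ⟨b, ⟨hb, hfb⟩, rfl⟩
      exact hcmono ha.1 hb (hle b hb hfb)

theorem stmt_13 (X : Set ℝ) (aL aU : ℝ) (haa : aL ≤ aU)
    (c : ℝ → ℝ) (hcconv : ConvexOn ℝ (Icc aL aU) c) (hcmono : MonotoneOn c (Icc aL aU))
    (hccont : ContinuousOn c (Icc aL aU))
    (h : ℝ → ℝ → ℝ)
    (hcont : ∀ x ∈ X, ContinuousOn (h x) (Icc aL aU))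
    (hconc : ∀ x ∈ X, ConcaveOn ℝ (Icc aL aU) (h x))
    (hmonoa : ∀ x ∈ X, MonotoneOn (h x) (Icc aL aU))
    (hmonox : ∀ a ∈ Icc aL aU, ∀ x ∈ X, ∀ x' ∈ X, x ≤ x' → h x a ≤ h x' a)
    -- supermodular in (x,a)
    (hsm : ∀ x ∈ X, ∀ x' ∈ X, x ≤ x' → ∀ a ∈ Icc aL aU, ∀ a' ∈ Icc aL aU, a ≤ a' →
      h x' a + h x a' ≤ h x' a' + h x a) :
    -- C has decreasing differences in x and hh
    ∀ x ∈ X, ∀ x' ∈ X, x < x' →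
      ∀ hh ∈ (h x '' Icc aL aU) ∩ (h x' '' Icc aL aU),
      ∀ hh' ∈ (h x '' Icc aL aU) ∩ (h x' '' Icc aL aU), hh < hh' →
        sInf (c '' {a ∈ Icc aL aU | h x' a = hh'}) -
            sInf (c '' {a ∈ Icc aL aU | h x a = hh'}) ≤
          sInf (c '' {a ∈ Icc aL aU | h x' a = hh}) -
            sInf (c '' {a ∈ Icc aL aU | h x a = hh}) := by
  intro x hx x' hx' hxx hh hhm hh' hh'm hhh
  obtain ⟨a1, ha1, ha1min⟩ := least_level (hcont x hx) hhm.1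
  obtain ⟨a2, ha2, ha2min⟩ := least_level (hcont x hx) hh'm.1
  obtain ⟨b1, hb1, hb1min⟩ := least_level (hcont x' hx') hhm.2
  obtain ⟨b2, hb2, hb2min⟩ := least_level (hcont x' hx') hh'm.2
  rw [sInf_level hcmono ha1 ha1min, sInf_level hcmono ha2 ha2min,
    sInf_level hcmono hb1 hb1min, sInf_level hcmono hb2 hb2min]
  -- basic order facts
  have ha12 : a1 < a2 := by
    by_contra hcon
    exact absurd (hmonoa x hx ha2.1 ha1.1 (not_lt.1 hcon)) (by rw [ha1.2, ha2.2]; exact not_le.2 hhh)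
  have hb12 : b1 < b2 := by
    by_contra hcon
    exact absurd (hmonoa x' hx' hb2.1 hb1.1 (not_lt.1 hcon)) (by rw [hb1.2, hb2.2]; exact not_le.2 hhh)
  -- b1 ≤ a1 : there is a point in [aL, a1] where h x' equals hh
  have key : ∀ v : ℝ, v ∈ h x' '' Icc aL aU → ∀ a ∈ Icc aL aU, v ≤ h x' a →
      ∃ s ∈ Icc aL aU, s ≤ a ∧ h x' s = v := by
    intro v hvim a haI hva
    obtain ⟨a0, ha0, hfa0⟩ := hvim
    have hlow : h x' aL ≤ v := by
      rw [← hfa0]; exact hmonoa x' hx' (left_mem_Icc.2 haa) ha0 ha0.1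
    have hIVT := intermediate_value_Icc haI.1 ((hcont x' hx').mono (Icc_subset_Icc_right haI.2))
    obtain ⟨s, hsI, hsv⟩ := hIVT ⟨hlow, hva⟩
    exact ⟨s, ⟨hsI.1, hsI.2.trans haI.2⟩, hsI.2, hsv⟩
  have hb1a1 : b1 ≤ a1 := by
    obtain ⟨s, hsI, hsle, hsv⟩ := key hh hhm.2 a1 ha1.1
      (by rw [← ha1.2]; exact hmonox a1 ha1.1 x hx x' hx' hxx.le)
    exact (hb1min s hsI hsv).trans hsle
  have hb2a2 : b2 ≤ a2 := by
    obtain ⟨s, hsI, hsle, hsv⟩ := key hh' hh'm.2 a2 ha2.1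
      (by rw [← ha2.2]; exact hmonox a2 ha2.1 x hx x' hx' hxx.le)
    exact (hb2min s hsI hsv).trans hsle
  -- t := b1 + (a2 - a1)
  set t : ℝ := b1 + (a2 - a1) with ht
  have htI : t ∈ Icc aL aU := ⟨le_trans hb1.1.1 (by linarith), by
    have : t ≤ a2 := by linarith
    exact this.trans ha2.1.2⟩
  have hb1t : b1 < t := by simp [ht]; linarith
  -- supermodularity
  have hsm' := hsm x hx x' hx' hxx.le a1 ha1.1 a2 ha2.1 ha12.le
  -- concavity: h x' t - h x' b1 ≥ h x' a2 - h x' a1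
  have hconcineq : h x' a2 - h x' a1 ≤ h x' t - h x' b1 := by
    have hneg : ConvexOn ℝ (Icc aL aU) (fun a => -(h x' a)) := (hconc x' hx').neg
    have := slope_cmp hneg hb1.1 htI ha1.1 ha2.1 hb1a1 (by linarith) hb1t ha12
    have htb : t - b1 = a2 - a1 := by simp [ht]
    rw [htb] at this
    have hpos : (0:ℝ) < a2 - a1 := by linarith
    have := (div_le_div_iff_of_pos_right hpos).1 this
    simp at this; linarith
  -- h x' t ≥ hh'
  have hhh'le : hh' ≤ h x' t := by
    have h1 : h x a1 = hh := ha1.2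
    have h2 : h x a2 = hh' := ha2.2
    have h3 : h x' b1 = hh := hb1.2
    linarith
  -- IVT on [b1, t] to find point where h x' = hh'
  have hb2t : b2 ≤ t := by
    have hIVT := intermediate_value_Icc hb1t.le
      ((hcont x' hx').mono (Icc_subset_Icc hb1.1.1 htI.2))
    obtain ⟨s, hsI, hsv⟩ := hIVT ⟨by rw [hb1.2]; exact hhh.le, hhh'le⟩
    exact (hb2min s ⟨le_trans hb1.1.1 hsI.1, hsI.2.trans htI.2⟩ hsv).trans hsI.2
  -- final convexity argument
  have hslope := slope_cmp hcconv hb1.1 hb2.1 ha1.1 ha2.1 hb1a1 hb2a2 hb12 ha12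
  have hnn : 0 ≤ (c a2 - c a1) / (a2 - a1) :=
    div_nonneg (by linarith [hcmono ha1.1 ha2.1 ha12.le]) (by linarith)
  have hlen : b2 - b1 ≤ a2 - a1 := by simp [ht] at hb2t; linarith
  have hposb : (0:ℝ) < b2 - b1 := by linarith
  have hposa : (0:ℝ) < a2 - a1 := by linarith
  have key2 : c b2 - c b1 ≤ c a2 - c a1 := by
    have e1 : c b2 - c b1 = (c b2 - c b1) / (b2 - b1) * (b2 - b1) := by
      field_simp
    have e2 : c a2 - c a1 = (c a2 - c a1) / (a2 - a1) * (a2 - a1) := by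
      field_simp
    rw [e1, e2]
    calc (c b2 - c b1) / (b2 - b1) * (b2 - b1)
        ≤ (c a2 - c a1) / (a2 - a1) * (b2 - b1) := by
          exact mul_le_mul_of_nonneg_right hslope hposb.le
      _ ≤ (c a2 - c a1) / (a2 - a1) * (a2 - a1) :=
          mul_le_mul_of_nonneg_left hlen hnn
  linarith
end

section
/- Let X = [−M, M] with M > 1 and define the truncated linear kernel P(x'|x,a) induced by x' = median(−M, Ax + Ba + W, M) with A, B > 0 and W uniform on {−1, +1}. Then there exists a bounded nondecreasing function φ : X → ℝ and points x, a such that E[φ(x')|x,a] fails to have increasing differences in x and a. -/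
open Set

theorem stmt_17 (M A B : ℝ) (hM : 1 < M) (hA : 0 < A) (hB : 0 < B) :
    ∃ φ : ℝ → ℝ, Monotone φ ∧ (∃ C, ∀ z, |φ z| ≤ C) ∧
      ∃ x x' a a' : ℝ, x ∈ Icc (-M) M ∧ x' ∈ Icc (-M) M ∧ x ≤ x' ∧ a ≤ a' ∧
        -- E[φ(x_next)|x,a] = ½ φ(clip(Ax+Ba+1)) + ½ φ(clip(Ax+Ba−1)) fails
        -- increasing differences in x and a:
        (φ (max (-M) (min M (A * x' + B * a' + 1))) +
            φ (max (-M) (min M (A * x' + B * a' - 1)))) / 2 -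
          (φ (max (-M) (min M (A * x' + B * a + 1))) +
            φ (max (-M) (min M (A * x' + B * a - 1)))) / 2 <
        (φ (max (-M) (min M (A * x + B * a' + 1))) +
            φ (max (-M) (min M (A * x + B * a' - 1)))) / 2 -
          (φ (max (-M) (min M (A * x + B * a + 1))) +
            φ (max (-M) (min M (A * x + B * a - 1)))) / 2 := by
  set ε := min 1 ((M - 1) / A) with hεdef
  have hε0 : 0 < ε := lt_min one_pos (div_pos (by linarith) hA)
  have hε1 : ε ≤ 1 := min_le_left _ _
  have hAε : A * ε ≤ M - 1 := by
    have h := min_le_right 1 ((M - 1) / A)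
    have : A * ε ≤ A * ((M - 1) / A) :=
      mul_le_mul_of_nonneg_left (hεdef ▸ h) hA.le
    calc A * ε ≤ A * ((M - 1) / A) := this
      _ = M - 1 := by field_simp
  have hAε0 : 0 < A * ε := mul_pos hA hε0
  set t := A * ε + 1 with ht
  have htM : t ≤ M := by linarith
  have hmMt : -M < t := by linarith
  have key : ∀ v : ℝ, (if t ≤ max (-M) (min M v) then (1 : ℝ) else 0)
      = if t ≤ v then 1 else 0 := by
    intro v
    rcases le_or_gt t v with h | h
    · rw [if_pos h, if_pos (le_max_of_le_right (le_min htM h))]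
    · rw [if_neg (not_le.mpr h), if_neg]
      push_neg
      exact max_lt hmMt (lt_of_le_of_lt (min_le_right _ _) h)
  have hBa' : B * ((A * ε + 2) / B) = A * ε + 2 := by field_simp
  refine ⟨fun z => if t ≤ z then 1 else 0, ?_, ⟨1, ?_⟩, 0, ε, 0, (A * ε + 2) / B,
    ⟨by linarith, by linarith⟩, ⟨by linarith, by linarith⟩, hε0.le, ?_, ?_⟩
  · intro u v huv
    dsimp only
    split_ifs with h1 h2
    · exact le_refl 1
    · exact absurd (le_trans h1 huv) h2
    · norm_num
    · exact le_refl 0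
  · intro z
    dsimp only
    split_ifs <;> norm_num
  · positivity
  · dsimp only
    rw [key, key, key, key, key, key, key, key, hBa']
    have c1 : t ≤ A * ε + (A * ε + 2) + 1 := by linarith
    have c2 : t ≤ A * ε + (A * ε + 2) - 1 := by linarith
    have c3 : t ≤ A * ε + B * 0 + 1 := by linarith [mul_zero B]
    have c4 : ¬ t ≤ A * ε + B * 0 - 1 := not_le.mpr (by linarith [mul_zero B])
    have c5 : t ≤ A * 0 + (A * ε + 2) + 1 := by linarith [mul_zero A]
    have c6 : t ≤ A * 0 + (A * ε + 2) - 1 := by linarith [mul_zero A]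
    have c7 : ¬ t ≤ A * 0 + B * 0 + 1 := not_le.mpr (by linarith [mul_zero A, mul_zero B])
    have c8 : ¬ t ≤ A * 0 + B * 0 - 1 := not_le.mpr (by linarith [mul_zero A, mul_zero B])
    rw [if_pos c1, if_pos c2, if_pos c3, if_neg c4, if_pos c5, if_pos c6,
      if_neg c7, if_neg c8]
    norm_num
end
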